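/- Let Q be a forcing poset, N a set, and q ∈ Q. Then q is strongly N-generic if and only if there is a function r ↦ r↾N defined on all r ≤ q such that r↾N ∈ N ∩ Q and every v ≤ r↾N in N ∩ Q is compatible with r in Q. -/
import Mathlib


/-- Two conditions are compatible if they have a common lower bound. -/
def Compat {Q : Type*} [Preorder Q] (x y : Q) : Prop := ∃ z, z ≤ x ∧ z ≤ y

/-- Compatibility within a subposet `P`. -/
def CompatIn {Q : Type*} [Preorder Q] (P : Set Q) (x y : Q) : Prop :=
  ∃ z ∈ P, z ≤ x ∧ z ≤ y

/-- `A` is a maximal antichain of the subposet `P`. -/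
def IsMaxAntichainIn {Q : Type*} [Preorder Q] (P A : Set Q) : Prop :=
  A ⊆ P ∧ (∀ a ∈ A, ∀ b ∈ A, a ≠ b → ¬ CompatIn P a b) ∧
    ∀ p ∈ P, ∃ a ∈ A, CompatIn P p a

/-- `G` is a filter on the subposet `P`. -/
def IsFilterOn {Q : Type*} [Preorder Q] (P G : Set Q) : Prop :=
  G ⊆ P ∧ G.Nonempty ∧ (∀ p ∈ G, ∀ q ∈ P, p ≤ q → q ∈ G) ∧
    ∀ p ∈ G, ∀ q ∈ G, ∃ r ∈ G, r ≤ p ∧ r ≤ q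

/-- `G` is a (V-)generic filter on the subposet `P`: it meets every
maximal antichain of `P` (all of which lie in the ground model `V`). -/
def IsGenericOn {Q : Type*} [Preorder Q] (P G : Set Q) : Prop :=
  IsFilterOn P G ∧ ∀ A : Set Q, IsMaxAntichainIn P A → (G ∩ A).Nonempty

/-- `P` is a regular suborder of `Q`: elements of `P` compatible in `Q` are
compatible in `P`, and every maximal antichain of `P` is a maximal antichain of `Q`. -/
def IsRegularSuborder {Q : Type*} [Preorder Q] (P : Set Q) : Prop :=
  (∀ p ∈ P, ∀ q ∈ P, Compat p q → CompatIn P p q) ∧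
    ∀ A : Set Q, IsMaxAntichainIn P A → IsMaxAntichainIn Set.univ A

/-- `q` is a strongly `N`-generic condition: every set `D` dense in the subposet
`N ∩ Q` (here `N` denotes the trace `N ∩ Q`, a set of conditions) is predense
in `Q` below `q`. -/
def StronglyGeneric {Q : Type*} [Preorder Q] (N : Set Q) (q : Q) : Prop :=
  ∀ D : Set Q, D ⊆ N → (∀ p ∈ N, ∃ d ∈ D, d ≤ p) →
    ∀ r, r ≤ q → ∃ d ∈ D, Compat r d

/-- `q` is strongly `N`-generic iff there is a restriction map
`r ↦ r↾N` defined on all `r ≤ q` with `r↾N ∈ N ∩ Q`, such that every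
`v ≤ r↾N` in `N ∩ Q` is compatible with `r`. -/
theorem stmt_7 {Q : Type*} [Preorder Q] (N : Set Q) (q : Q) :
    StronglyGeneric N q ↔
      ∃ f : Q → Q, ∀ r, r ≤ q →
        f r ∈ N ∧ ∀ v ∈ N, v ≤ f r → Compat r v := by
  classical
  constructor
  · intro hsg
    have hex : ∀ r, r ≤ q → ∃ d, d ∈ N ∧ ∀ v ∈ N, v ≤ d → Compat r v := by
      intro r hr
      set D : Set Q := {v | v ∈ N ∧ (¬ Compat r v ∨ ∀ w ∈ N, w ≤ v → Compat r w)}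
      have hDsub : D ⊆ N := fun v hv => hv.1
      have hDdense : ∀ p ∈ N, ∃ d ∈ D, d ≤ p := by
        intro p hp
        by_cases h : ∃ v ∈ N, v ≤ p ∧ ¬ Compat r v
        · obtain ⟨v, hvN, hvp, hvnc⟩ := h
          exact ⟨v, ⟨hvN, Or.inl hvnc⟩, hvp⟩
        · push_neg at h
          exact ⟨p, ⟨hp, Or.inr fun w hw hwp => h w hw hwp⟩, le_refl p⟩
      obtain ⟨d, hdD, hdc⟩ := hsg D hDsub hDdense r hr
      rcases hdD.2 with h | h
      · exact absurd hdc h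
      · exact ⟨d, hdD.1, h⟩
    refine ⟨fun r => if h : r ≤ q then (hex r h).choose else r, fun r hr => ?_⟩
    simp only [dif_pos hr]
    exact ⟨(hex r hr).choose_spec.1, (hex r hr).choose_spec.2⟩
  · rintro ⟨f, hf⟩ D hDN hDdense r hr
    obtain ⟨hfN, hfc⟩ := hf r hr
    obtain ⟨d, hdD, hdle⟩ := hDdense (f r) hfN
    exact ⟨d, hdD, hfc d (hDN hdD) hdle⟩
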